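/- Let k and ℓ be integers with 1 ≤ ℓ ≤ k/2 (i.e., 2ℓ ≤ k), and let n ≡ ℓ (mod k−ℓ). Then R̂(P^(k)_{n,ℓ}) ≤ R̂(P_n), where R̂(P_n) is the (2-uniform) size-Ramsey number of the path graph P_n on n vertices. -/

import Mathlib

/-- A `k`-uniform hypergraph on a finite vertex set of naturals:
each edge is a `k`-element subset of the vertex set. -/
structure UniformHypergraph (k : ℕ) where
  verts : Finset ℕ
  edges : Finset (Finset ℕ)
  card_eq : ∀ e ∈ edges, e.card = k
  subset_verts : ∀ e ∈ edges, e ⊆ verts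

namespace UniformHypergraph

/-- `H.IsCopy G f` : the injection `f` embeds `G` into `H` as a subhypergraph. -/
def IsCopy {k : ℕ} (H G : UniformHypergraph k) (f : ℕ → ℕ) : Prop :=
  Set.InjOn f ↑G.verts ∧ Set.MapsTo f ↑G.verts ↑H.verts ∧
    ∀ e ∈ G.edges, e.image f ∈ H.edges

/-- `H.Arrows G` : every 2-coloring of the edges of `H` yields a monochromatic copy of `G`. -/
def Arrows {k : ℕ} (H G : UniformHypergraph k) : Prop :=
  ∀ χ : Finset ℕ → Bool, ∃ (f : ℕ → ℕ) (c : Bool),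
    H.IsCopy G f ∧ ∀ e ∈ G.edges, χ (e.image f) = c

/-- The size-Ramsey number `R̂(G)`: the least number of edges of a hypergraph `H` with `H → G`. -/
noncomputable def sizeRamsey {k : ℕ} (G : UniformHypergraph k) : ℕ :=
  sInf { m | ∃ H : UniformHypergraph k, H.Arrows G ∧ H.edges.card = m }

/-- The complete `k`-uniform hypergraph on `N` vertices. -/
def completeHG (k N : ℕ) : UniformHypergraph k where
  verts := Finset.range N
  edges := Finset.powersetCard k (Finset.range N)
  card_eq := fun _ he => (Finset.mem_powersetCard.mp he).2
  subset_verts := fun _ he => (Finset.mem_powersetCard.mp he).1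

/-- The Ramsey number `R(G)`: the least `N` with `K_N^(k) → G`. -/
noncomputable def ramsey {k : ℕ} (G : UniformHypergraph k) : ℕ :=
  sInf { N | (completeHG k N).Arrows G }

end UniformHypergraph

/-- The `ℓ`-path `P^(k)_{n,ℓ}`: vertex set `{1,…,n}`, edges are the intervals
`{(i−1)(k−ℓ)+1, …, (i−1)(k−ℓ)+k}` for `i = 1, …, (n−ℓ)/(k−ℓ)`. -/
def pathHG (k ℓ n : ℕ) : UniformHypergraph k where
  verts := Finset.Icc 1 n
  edges := Finset.image (fun i => Finset.Icc (i * (k - ℓ) + 1) (i * (k - ℓ) + k))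
    (Finset.range ((n - ℓ) / (k - ℓ)))
  card_eq := by
    intro e he
    simp only [Finset.mem_image, Finset.mem_range] at he
    obtain ⟨i, _, rfl⟩ := he
    rw [Nat.card_Icc]
    omega
  subset_verts := by
    intro e he
    simp only [Finset.mem_image, Finset.mem_range] at he
    obtain ⟨i, hi, rfl⟩ := he
    intro x hx
    simp only [Finset.mem_Icc] at hx ⊢
    rcases le_or_gt k ℓ with hkl | hkl
    · rw [Nat.sub_eq_zero_of_le hkl, Nat.div_zero] at hi
      omega
    · have h2 : i * (k - ℓ) + (k - ℓ) ≤ n - ℓ := by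
        calc i * (k - ℓ) + (k - ℓ) = (i + 1) * (k - ℓ) := by ring
          _ ≤ ((n - ℓ) / (k - ℓ)) * (k - ℓ) := Nat.mul_le_mul_right _ hi
          _ ≤ n - ℓ := Nat.div_mul_le_self _ _
      omega


set_option maxHeartbeats 1000000

namespace Stmt3Aux
open UniformHypergraph

lemma two_paths (χ : Finset ℕ → Bool) (S : Finset ℕ) :
    ∃ R B : List ℕ, R.Nodup ∧ B.Nodup ∧ (∀ x ∈ R, x ∉ B) ∧
      (∀ x, x ∈ R ∨ x ∈ B ↔ x ∈ S) ∧
      List.IsChain (fun a b => χ {a, b} = true) R ∧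
      List.IsChain (fun a b => χ {a, b} = false) B := by
  induction S using Finset.induction_on with
  | empty => exact ⟨[], [], by simp, by simp, by simp, by simp, by simp, by simp⟩
  | @insert a S ha ih =>
    obtain ⟨R, B, hRn, hBn, hd, hu, hcR, hcB⟩ := ih
    have haR : a ∉ R := fun h => ha ((hu a).1 (Or.inl h))
    have haB : a ∉ B := fun h => ha ((hu a).1 (Or.inr h))
    rcases R with _ | ⟨r, R'⟩
    · refine ⟨[a], B, by simp, hBn, ?_, ?_, by simp, hcB⟩
      · intro x hx; simp at hx; subst hx; exact haB
      · intro x; have := hu x; simp at this ⊢; tauto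
    rcases B with _ | ⟨b, B'⟩
    · refine ⟨r :: R', [a], hRn, by simp, ?_, ?_, hcR, by simp⟩
      · intro x hx; simp; intro h; subst h; exact haR hx
      · intro x; have := hu x; simp at this ⊢; tauto
    by_cases h1 : χ {a, r} = true
    · refine ⟨a :: r :: R', b :: B', by simp [haR, hRn], hBn, ?_, ?_,
        List.isChain_cons_cons.2 ⟨h1, hcR⟩, hcB⟩
      · intro x hx; simp at hx
        rcases hx with rfl | hx
        · exact haB
        · exact hd x (List.mem_cons.2 hx)
      · intro x; have := hu x; simp at this ⊢; tauto
    by_cases h2 : χ {a, b} = false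
    · refine ⟨r :: R', a :: b :: B', hRn, by simp [haB, hBn], ?_, ?_,
        hcR, List.isChain_cons_cons.2 ⟨h2, hcB⟩⟩
      · intro x hx; simp
        have h4 := hd x hx; simp at h4
        exact ⟨fun h => haR (h ▸ hx), h4⟩
      · intro x; have := hu x; simp at this ⊢; tauto
    have h1' : χ {a, r} = false := by simpa using h1
    have h2' : χ {a, b} = true := by simpa using h2
    have hbR : b ∉ r :: R' := fun h => hd b h (by simp)
    have hrB : r ∉ b :: B' := hd r (by simp)
    by_cases h3 : χ {r, b} = true
    · -- new red path a :: b :: r :: R', blue B'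
      have hbr : χ {b, r} = true := by rwa [Finset.pair_comm] at h3
      refine ⟨a :: b :: r :: R', B', ?_, (List.nodup_cons.1 hBn).2, ?_, ?_,
        ?_, hcB.tail⟩
      · simp only [List.nodup_cons]
        refine ⟨?_, hbR, (List.nodup_cons.1 hRn).1, (List.nodup_cons.1 hRn).2⟩
        simp only [List.mem_cons]; push_neg
        exact ⟨fun h => haB (h ▸ (List.mem_cons_self (a := b) (l := B'))), fun h => haR (h ▸ (List.mem_cons_self (a := r) (l := R'))), fun h => haR (List.mem_cons_of_mem r h)⟩
      · intro x hx hxB'; simp at hx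
        rcases hx with rfl | rfl | hx
        · exact haB (List.mem_cons_of_mem b hxB')
        · exact (List.nodup_cons.1 hBn).1 hxB'
        · exact hd x (List.mem_cons.2 hx) (List.mem_cons_of_mem b hxB')
      · intro x; have := hu x; simp at this ⊢; tauto
      · exact List.isChain_cons_cons.2 ⟨h2', List.isChain_cons_cons.2 ⟨hbr, hcR⟩⟩
    · have h3' : χ {r, b} = false := by simpa using h3
      refine ⟨R', a :: r :: b :: B', (List.nodup_cons.1 hRn).2, ?_, ?_, ?_,
        hcR.tail, ?_⟩
      · simp only [List.nodup_cons]
        refine ⟨?_, hrB, (List.nodup_cons.1 hBn).1, (List.nodup_cons.1 hBn).2⟩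
        simp only [List.mem_cons]; push_neg
        exact ⟨fun h => haR (h ▸ (List.mem_cons_self (a := r) (l := R'))), fun h => haB (h ▸ (List.mem_cons_self (a := b) (l := B'))), fun h => haB (List.mem_cons_of_mem b h)⟩
      · intro x hx; simp
        have hxR : x ∈ r :: R' := List.mem_cons_of_mem r hx
        have h4 := hd x hxR; simp at h4
        refine ⟨fun h => haR (h ▸ hxR), fun h => (List.nodup_cons.1 hRn).1 (h ▸ hx), h4⟩
      · intro x; have := hu x; simp at this ⊢; tauto
      · exact List.isChain_cons_cons.2 ⟨h1', List.isChain_cons_cons.2 ⟨h3', hcB⟩⟩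


lemma path2_edges (n : ℕ) : (pathHG 2 1 n).edges
    = (Finset.range (n-1)).image (fun i => ({i+1, i+2} : Finset ℕ)) := by
  show Finset.image (fun i => Finset.Icc (i * (2-1) + 1) (i * (2-1) + 2)) (Finset.range ((n-1)/(2-1))) = _
  have h1 : (n-1)/(2-1) = n - 1 := by norm_num
  rw [h1]
  apply Finset.image_congr
  intro i _
  ext x
  simp only [Finset.mem_Icc, Finset.mem_insert, Finset.mem_singleton]
  omega

lemma path_of_list (n N : ℕ) (χ : Finset ℕ → Bool) (c : Bool) (L : List ℕ)
    (hlen : n ≤ L.length) (hnd : L.Nodup) (hmem : ∀ x ∈ L, x ∈ Finset.range N)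
    (hch : List.IsChain (fun a b => χ {a, b} = c) L) :
    ∃ f, (completeHG 2 N).IsCopy (pathHG 2 1 n) f ∧
      ∀ e ∈ (pathHG 2 1 n).edges, χ (e.image f) = c := by
  set L' := L.take n with hL'
  have hlen' : L'.length = n := by simp [hL', hlen]
  have hnd' : L'.Nodup := hnd.sublist (List.take_sublist n L)
  have hmem' : ∀ x ∈ L', x ∈ Finset.range N := fun x hx => hmem x ((List.take_sublist n L).mem hx)
  have hch' : List.IsChain (fun a b => χ {a, b} = c) L' := hch.take n
  refine ⟨fun j => L'.getD (j-1) 0, ⟨?_, ?_, ?_⟩, ?_⟩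
  · intro x hx y hy hxy
    simp only [pathHG, Finset.coe_Icc, Set.mem_Icc] at hx hy
    have hx1 : x - 1 < L'.length := by omega
    have hy1 : y - 1 < L'.length := by omega
    simp only at hxy
    rw [List.getD_eq_getElem L' 0 hx1, List.getD_eq_getElem L' 0 hy1] at hxy
    have := (hnd'.getElem_inj_iff).1 hxy
    omega
  · intro x hx
    simp only [pathHG, Finset.coe_Icc, Set.mem_Icc] at hx
    have hx1 : x - 1 < L'.length := by omega
    show L'.getD (x-1) 0 ∈ _
    rw [List.getD_eq_getElem L' 0 hx1]
    exact hmem' _ (List.getElem_mem hx1)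
  · intro e he
    rw [path2_edges] at he
    simp only [Finset.mem_image, Finset.mem_range] at he
    obtain ⟨i, hi, rfl⟩ := he
    have h1 : i < L'.length := by omega
    have h2 : i + 1 < L'.length := by omega
    have himg : Finset.image (fun j => L'.getD (j-1) 0) {i+1, i+2} = {L'[i], L'[i+1]} := by
      rw [Finset.image_insert, Finset.image_singleton]
      simp only [Nat.add_sub_cancel]
      rw [List.getD_eq_getElem L' 0 h1, show i + 2 - 1 = i + 1 by omega,
        List.getD_eq_getElem L' 0 h2]
    rw [himg]
    show _ ∈ Finset.powersetCard 2 (Finset.range N)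
    rw [Finset.mem_powersetCard]
    constructor
    · intro x hx
      simp only [Finset.mem_insert, Finset.mem_singleton] at hx
      rcases hx with rfl | rfl
      · exact hmem' _ (List.getElem_mem h1)
      · exact hmem' _ (List.getElem_mem h2)
    · rw [Finset.card_insert_of_notMem, Finset.card_singleton]
      simp only [Finset.mem_singleton]
      rw [hnd'.getElem_inj_iff]
      omega
  · intro e he
    rw [path2_edges] at he
    simp only [Finset.mem_image, Finset.mem_range] at he
    obtain ⟨i, hi, rfl⟩ := he
    have h1 : i < L'.length := by omega
    have h2 : i + 1 < L'.length := by omega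
    have himg : Finset.image (fun j => L'.getD (j-1) 0) {i+1, i+2} = {L'[i], L'[i+1]} := by
      rw [Finset.image_insert, Finset.image_singleton]
      simp only [Nat.add_sub_cancel]
      rw [List.getD_eq_getElem L' 0 h1, show i + 2 - 1 = i + 1 by omega,
        List.getD_eq_getElem L' 0 h2]
    rw [himg]
    have := List.isChain_iff_getElem.1 hch' i (by omega)
    simpa using this

lemma complete_arrows (n : ℕ) : (completeHG 2 (2*n)).Arrows (pathHG 2 1 n) := by
  intro χ
  obtain ⟨R, B, hRn, hBn, hd, hu, hcR, hcB⟩ := two_paths χ (Finset.range (2*n))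
  have hcard : R.length + B.length = 2 * n := by
    have h1 : R.toFinset ∪ B.toFinset = Finset.range (2*n) := by
      ext x
      simp only [Finset.mem_union, List.mem_toFinset]
      exact hu x
    have h2 : Disjoint R.toFinset B.toFinset := by
      rw [Finset.disjoint_left]
      intro x hx
      simp only [List.mem_toFinset] at *
      exact hd x hx
    have h3 := Finset.card_union_of_disjoint h2
    rw [h1, Finset.card_range, List.toFinset_card_of_nodup hRn,
      List.toFinset_card_of_nodup hBn] at h3
    omega
  rcases le_or_gt n R.length with h | h
  · obtain ⟨f, hf1, hf2⟩ := path_of_list n (2*n) χ true R h hRn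
      (fun x hx => (hu x).1 (Or.inl hx)) hcR
    exact ⟨f, true, hf1, hf2⟩
  · obtain ⟨f, hf1, hf2⟩ := path_of_list n (2*n) χ false B (by omega) hBn
      (fun x hx => (hu x).1 (Or.inr hx)) hcB
    exact ⟨f, false, hf1, hf2⟩

/-! ### Part C: the blow-up construction -/

def core (v j : ℕ) : ℕ := Nat.pair 0 (Nat.pair v j)
def extra (u v j : ℕ) : ℕ := Nat.pair 1 (Nat.pair (Nat.pair u v) j)

def bigEdge (k ℓ : ℕ) (e : Finset ℕ) : Finset ℕ :=
  ((Finset.range ℓ).image (core (e.min.getD 0)) ∪ (Finset.range ℓ).image (core (e.max.getD 0)))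
    ∪ (Finset.range (k - 2*ℓ)).image (extra (e.min.getD 0) (e.max.getD 0))

lemma pair_min_getD (x y : ℕ) : ({x,y} : Finset ℕ).min.getD 0 = min x y := by
  rw [show ({x,y}:Finset ℕ) = insert x {y} from rfl, Finset.min_insert, Finset.min_singleton]
  rfl

lemma pair_max_getD (x y : ℕ) : ({x,y} : Finset ℕ).max.getD 0 = max x y := by
  rw [show ({x,y}:Finset ℕ) = insert x {y} from rfl, Finset.max_insert, Finset.max_singleton]
  rfl

lemma bigEdge_pair (k ℓ : ℕ) (x y : ℕ) :
    bigEdge k ℓ {x, y} =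
      ((Finset.range ℓ).image (core x) ∪ (Finset.range ℓ).image (core y))
        ∪ (Finset.range (k - 2*ℓ)).image (extra (min x y) (max x y)) := by
  unfold bigEdge
  rw [pair_min_getD, pair_max_getD]
  rcases le_total x y with h | h
  · rw [min_eq_left h, max_eq_right h]
  · rw [min_eq_right h, max_eq_left h, Finset.union_comm ((Finset.range ℓ).image (core y))]

lemma core_injective (v : ℕ) : Function.Injective (core v) := by
  intro a b h
  simp only [core, Nat.pair_eq_pair] at h
  exact h.2.2

lemma extra_injective (u v : ℕ) : Function.Injective (extra u v) := by
  intro a b h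
  simp only [extra, Nat.pair_eq_pair] at h
  exact h.2.2

lemma core_ne_extra (v j u w i : ℕ) : core v j ≠ extra u w i := by
  intro h
  rw [core, extra, Nat.pair_eq_pair] at h
  exact absurd h.1 (by omega)

lemma card_bigEdge (k ℓ : ℕ) (h2 : 2*ℓ ≤ k) {x y : ℕ} (hxy : x ≠ y) :
    (bigEdge k ℓ {x, y}).card = k := by
  rw [bigEdge_pair]
  have d1 : Disjoint ((Finset.range ℓ).image (core x)) ((Finset.range ℓ).image (core y)) := by
    rw [Finset.disjoint_left]
    intro a ha hb
    simp only [Finset.mem_image, Finset.mem_range] at ha hb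
    obtain ⟨i, _, rfl⟩ := ha
    obtain ⟨j, _, hj⟩ := hb
    simp only [core, Nat.pair_eq_pair] at hj
    exact hxy hj.2.1.symm
  have d2 : Disjoint
      (((Finset.range ℓ).image (core x) ∪ (Finset.range ℓ).image (core y)))
      ((Finset.range (k - 2*ℓ)).image (extra (min x y) (max x y))) := by
    rw [Finset.disjoint_left]
    intro a ha hb
    simp only [Finset.mem_union, Finset.mem_image, Finset.mem_range] at ha hb
    obtain ⟨j, _, hj⟩ := hb
    rcases ha with ⟨i, _, rfl⟩ | ⟨i, _, rfl⟩ <;> exact core_ne_extra _ _ _ _ _ hj.symm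
  rw [Finset.card_union_of_disjoint d2, Finset.card_union_of_disjoint d1,
    Finset.card_image_of_injective _ (core_injective x),
    Finset.card_image_of_injective _ (core_injective y),
    Finset.card_image_of_injective _ (extra_injective _ _),
    Finset.card_range, Finset.card_range]
  omega

lemma core_mem_bigEdge (k ℓ : ℕ) {a x y j : ℕ} (ha : a = x ∨ a = y) (hj : j < ℓ) :
    core a j ∈ bigEdge k ℓ {x, y} := by
  rw [bigEdge_pair]
  simp only [Finset.mem_union, Finset.mem_image, Finset.mem_range]
  rcases ha with rfl | rfl
  · exact Or.inl (Or.inl ⟨j, hj, rfl⟩)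
  · exact Or.inl (Or.inr ⟨j, hj, rfl⟩)

lemma core_of_mem_bigEdge (k ℓ : ℕ) {a x y j : ℕ} (h : core a j ∈ bigEdge k ℓ {x, y}) :
    a = x ∨ a = y := by
  rw [bigEdge_pair] at h
  simp only [Finset.mem_union, Finset.mem_image, Finset.mem_range] at h
  rcases h with (⟨i, _, hi⟩ | ⟨i, _, hi⟩) | ⟨i, _, hi⟩
  · simp only [core, Nat.pair_eq_pair] at hi
    exact Or.inl hi.2.1.symm
  · simp only [core, Nat.pair_eq_pair] at hi
    exact Or.inr hi.2.1.symm
  · exact absurd hi.symm (core_ne_extra _ _ _ _ _)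

lemma bigEdge_inj_pairs (k ℓ : ℕ) (h1 : 1 ≤ ℓ) {x y x' y' : ℕ} (hxy : x ≠ y) (hxy' : x' ≠ y')
    (h : bigEdge k ℓ ({x, y} : Finset ℕ) = bigEdge k ℓ {x', y'}) :
    ({x, y} : Finset ℕ) = {x', y'} := by
  have key : ∀ a, a = x ∨ a = y → a = x' ∨ a = y' := by
    intro a ha
    exact core_of_mem_bigEdge k ℓ (h ▸ core_mem_bigEdge k ℓ ha (by omega : 0 < ℓ))
  have hx := key x (Or.inl rfl)
  have hy := key y (Or.inr rfl)
  apply Finset.eq_of_subset_of_card_le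
  · intro z hz
    simp only [Finset.mem_insert, Finset.mem_singleton] at hz ⊢
    rcases hz with rfl | rfl
    · exact hx
    · exact hy
  · rw [Finset.card_insert_of_notMem (by simpa using hxy'),
      Finset.card_insert_of_notMem (by simpa using hxy)]
    simp

def bigHG (k ℓ : ℕ) (h2 : 2*ℓ ≤ k) (H : UniformHypergraph 2) : UniformHypergraph k where
  verts := H.edges.sup (bigEdge k ℓ)
  edges := H.edges.image (bigEdge k ℓ)
  card_eq := by
    intro e he
    simp only [Finset.mem_image] at he
    obtain ⟨e', he', rfl⟩ := he
    obtain ⟨x, y, hxy, rfl⟩ := Finset.card_eq_two.1 (H.card_eq e' he')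
    exact card_bigEdge k ℓ h2 hxy
  subset_verts := by
    intro e he
    simp only [Finset.mem_image] at he
    obtain ⟨e', he', rfl⟩ := he
    exact Finset.le_sup (f := bigEdge k ℓ) he'

lemma big_arrows (k ℓ n : ℕ) (h1 : 1 ≤ ℓ) (h2 : 2*ℓ ≤ k) (hkn : k ≤ n)
    (hmod : n % (k-ℓ) = ℓ % (k-ℓ)) (H : UniformHypergraph 2) (hH : H.Arrows (pathHG 2 1 n)) :
    (bigHG k ℓ h2 H).Arrows (pathHG k ℓ n) := by
  intro χ'
  obtain ⟨f, c, ⟨finj, fmap, fedge⟩, fcol⟩ := hH (fun e => χ' (bigEdge k ℓ e))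
  set d := k - ℓ with hd
  have hld : ℓ ≤ d := by omega
  have hd1 : 1 ≤ d := by omega
  set m := (n - ℓ) / d with hm
  have h0 : (n - ℓ) % d = 0 := Nat.sub_mod_eq_zero_of_mod_eq hmod
  have hmd : m * d = n - ℓ := Nat.div_mul_cancel (Nat.dvd_of_mod_eq_zero h0)
  have hn : n = m * d + ℓ := by omega
  have hm1 : 1 ≤ m := by
    rcases Nat.eq_zero_or_pos m with h | h
    · rw [h, zero_mul] at hmd; omega
    · exact h
  have hmn : m + 1 ≤ n := by
    have hmm : m ≤ m * d := Nat.le_mul_of_pos_right m hd1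
    linarith
  -- cleaned versions of the copy facts
  have hfinj : ∀ a b : ℕ, 1 ≤ a → a ≤ n → 1 ≤ b → b ≤ n → f a = f b → a = b := by
    intro a b ha1 ha2 hb1 hb2 hab
    refine finj ?_ ?_ hab <;> · show _ ∈ (↑(Finset.Icc 1 n) : Set ℕ)
                                simp only [Finset.coe_Icc, Set.mem_Icc]
                                omega
  have fpair : ∀ j : ℕ, j < n - 1 → ({j+1, j+2} : Finset ℕ) ∈ (pathHG 2 1 n).edges := by
    intro j hj
    rw [path2_edges]
    exact Finset.mem_image.2 ⟨j, Finset.mem_range.2 hj, rfl⟩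
  have fedge' : ∀ j : ℕ, j < n - 1 → ({f (j+1), f (j+2)} : Finset ℕ) ∈ H.edges := by
    intro j hj
    have := fedge _ (fpair j hj)
    rwa [Finset.image_insert, Finset.image_singleton] at this
  have fcol' : ∀ j : ℕ, j < n - 1 → χ' (bigEdge k ℓ {f (j+1), f (j+2)}) = c := by
    intro j hj
    have := fcol _ (fpair j hj)
    rwa [Finset.image_insert, Finset.image_singleton] at this
  have fne : ∀ j : ℕ, j < n - 1 → f (j+1) ≠ f (j+2) := by
    intro j hj h
    have := hfinj (j+1) (j+2) (by omega) (by omega) (by omega) (by omega) h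
    omega
  -- div/mod helper
  have hdm : ∀ i r : ℕ, r < d → (i * d + r) / d = i ∧ (i * d + r) % d = r := by
    intro i r h
    constructor
    · rw [show i * d + r = r + d * i by ring, Nat.add_mul_div_left _ _ (by omega : 0 < d),
        Nat.div_eq_of_lt h, Nat.zero_add]
    · rw [show i * d + r = r + d * i by ring, Nat.add_mul_mod_self_left, Nat.mod_eq_of_lt h]
  -- the embedding
  set f' : ℕ → ℕ := fun x => if (x-1) % d < ℓ then core (f ((x-1)/d + 1)) ((x-1) % d)
      else extra (min (f ((x-1)/d + 1)) (f ((x-1)/d + 2)))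
        (max (f ((x-1)/d + 1)) (f ((x-1)/d + 2))) ((x-1) % d - ℓ) with hf'
  have hf'spec : ∀ i r : ℕ, r < d →
      f' (i*d + r + 1) = if r < ℓ then core (f (i+1)) r
        else extra (min (f (i+1)) (f (i+2))) (max (f (i+1)) (f (i+2))) (r - ℓ) := by
    intro i r h
    simp only [hf']
    rw [Nat.add_sub_cancel, (hdm i r h).1, (hdm i r h).2]
  -- index bounds
  have hible : ∀ i r : ℕ, r < d → i * d + r + 1 ≤ n → i ≤ m := by
    intro i r hr hle
    by_contra hc
    push_neg at hc
    have h3 : (m+1) * d ≤ i * d := Nat.mul_le_mul_right d hc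
    have h4 : (m+1) * d = m * d + d := by ring
    linarith
  have hible2 : ∀ i r : ℕ, ℓ ≤ r → r < d → i * d + r + 1 ≤ n → i + 1 ≤ m := by
    intro i r hlr hr hle
    by_contra hc
    push_neg at hc
    have h3 : m * d ≤ i * d := Nat.mul_le_mul_right d (by omega)
    linarith
  -- decomposition of a vertex
  have hdec : ∀ x : ℕ, ∃ i r, r < d ∧ x + 1 = i * d + r + 1 := by
    intro x
    exact ⟨x / d, x % d, Nat.mod_lt _ (by omega), by rw [mul_comm (x/d) d, Nat.div_add_mod]⟩
  -- edge images
  have himg : ∀ i : ℕ, i < m →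
      Finset.image f' (Finset.Icc (i*d+1) (i*d+k)) = bigEdge k ℓ {f (i+1), f (i+2)} := by
    intro i hi
    have hsplit : Finset.Icc (i*d+1) (i*d+k) =
        (Finset.Icc (i*d+1) (i*d+ℓ) ∪ Finset.Icc (i*d+ℓ+1) (i*d+d)) ∪
          Finset.Icc (i*d+d+1) (i*d+d+ℓ) := by
      ext x
      simp only [Finset.mem_union, Finset.mem_Icc]
      generalize i * d = p
      omega
    have hA : Finset.Icc (i*d+1) (i*d+ℓ) = (Finset.range ℓ).image (fun r => i*d + r + 1) := by
      ext x
      simp only [Finset.mem_Icc, Finset.mem_image, Finset.mem_range]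
      generalize i * d = p
      constructor
      · intro hx; exact ⟨x - p - 1, by omega, by omega⟩
      · rintro ⟨r, hr, rfl⟩; omega
    have hB : Finset.Icc (i*d+ℓ+1) (i*d+d) =
        (Finset.range (d - ℓ)).image (fun j => i*d + (ℓ + j) + 1) := by
      ext x
      simp only [Finset.mem_Icc, Finset.mem_image, Finset.mem_range]
      generalize i * d = p
      constructor
      · intro hx; exact ⟨x - p - ℓ - 1, by omega, by omega⟩
      · rintro ⟨r, hr, rfl⟩; omega
    have hC : Finset.Icc (i*d+d+1) (i*d+d+ℓ) =
        (Finset.range ℓ).image (fun r => i*d + d + r + 1) := by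
      ext x
      simp only [Finset.mem_Icc, Finset.mem_image, Finset.mem_range]
      generalize i * d = p
      constructor
      · intro hx; exact ⟨x - p - d - 1, by omega, by omega⟩
      · rintro ⟨r, hr, rfl⟩; omega
    have e1 : (i+1)*d = i*d + d := by ring
    have gA : Finset.image (f' ∘ fun r => i*d + r + 1) (Finset.range ℓ)
        = Finset.image (core (f (i+1))) (Finset.range ℓ) := by
      apply Finset.image_congr
      intro r hr
      simp only [Finset.coe_range, Set.mem_Iio] at hr
      show f' (i*d + r + 1) = _
      rw [hf'spec i r (by omega), if_pos hr]
    have gB : Finset.image (f' ∘ fun j => i*d + (ℓ + j) + 1) (Finset.range (d - ℓ))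
        = Finset.image (extra (min (f (i+1)) (f (i+2))) (max (f (i+1)) (f (i+2))))
            (Finset.range (d - ℓ)) := by
      apply Finset.image_congr
      intro j hj
      simp only [Finset.coe_range, Set.mem_Iio] at hj
      show f' (i*d + (ℓ + j) + 1) = _
      rw [hf'spec i (ℓ + j) (by omega), if_neg (by omega)]
      congr 1
      omega
    have gC : Finset.image (f' ∘ fun r => i*d + d + r + 1) (Finset.range ℓ)
        = Finset.image (core (f (i+2))) (Finset.range ℓ) := by
      apply Finset.image_congr
      intro r hr
      simp only [Finset.coe_range, Set.mem_Iio] at hr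
      show f' (i*d + d + r + 1) = _
      rw [← e1, hf'spec (i+1) r (by omega), if_pos hr]
    rw [hsplit, Finset.image_union, Finset.image_union, hA, hB, hC,
      Finset.image_image, Finset.image_image, Finset.image_image, gA, gB, gC,
      bigEdge_pair]
    have e2 : d - ℓ = k - 2*ℓ := by omega
    rw [e2]
    ext z
    simp only [Finset.mem_union]
    tauto
  have hpke : (pathHG k ℓ n).edges
      = Finset.image (fun i => Finset.Icc (i*d+1) (i*d+k)) (Finset.range m) := by
    show Finset.image (fun i => Finset.Icc (i*(k-ℓ)+1) (i*(k-ℓ)+k)) (Finset.range ((n-ℓ)/(k-ℓ))) = _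
    rw [← hd, ← hm]
  refine ⟨f', c, ⟨?_, ?_, ?_⟩, ?_⟩
  · -- InjOn
    intro x hx y hy hxy
    simp only [pathHG, Finset.coe_Icc, Set.mem_Icc] at hx hy
    obtain ⟨x1, rfl⟩ : ∃ t, x = t + 1 := ⟨x - 1, by omega⟩
    obtain ⟨y1, rfl⟩ : ∃ t, y = t + 1 := ⟨y - 1, by omega⟩
    obtain ⟨i, r, hrd, hx1⟩ := hdec x1
    obtain ⟨i', r', hrd', hy1⟩ := hdec y1
    rw [hx1] at hx
    rw [hy1] at hy
    rw [hx1, hy1] at hxy ⊢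
    rw [hf'spec i r hrd, hf'spec i' r' hrd'] at hxy
    have him : i ≤ m := hible i r hrd hx.2
    have him' : i' ≤ m := hible i' r' hrd' hy.2
    by_cases h5 : r < ℓ <;> by_cases h6 : r' < ℓ
    · rw [if_pos h5, if_pos h6] at hxy
      simp only [core, Nat.pair_eq_pair] at hxy
      obtain ⟨-, hv, hr⟩ := hxy
      have e3 : i + 1 = i' + 1 :=
        hfinj _ _ (by omega) (by omega) (by omega) (by omega) hv
      have : i = i' := by omega
      subst this
      rw [hr]
    · rw [if_pos h5, if_neg h6] at hxy
      exact absurd hxy (core_ne_extra _ _ _ _ _)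
    · rw [if_neg h5, if_pos h6] at hxy
      exact absurd hxy.symm (core_ne_extra _ _ _ _ _)
    · rw [if_neg h5, if_neg h6] at hxy
      simp only [extra, Nat.pair_eq_pair] at hxy
      obtain ⟨-, ⟨hmin, hmax⟩, hr⟩ := hxy
      have him2 : i + 1 ≤ m := hible2 i r (by omega) hrd hx.2
      have him2' : i' + 1 ≤ m := hible2 i' r' (by omega) hrd' hy.2
      have hrr : r = r' := by omega
      rcases (by omega :
          (f (i+1) = f (i'+1) ∧ f (i+2) = f (i'+2)) ∨
          (f (i+1) = f (i'+2) ∧ f (i+2) = f (i'+1))) with ⟨ha, hb⟩ | ⟨ha, hb⟩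
      · have e3 : i + 1 = i' + 1 :=
          hfinj _ _ (by omega) (by omega) (by omega) (by omega) ha
        have : i = i' := by omega
        subst this
        rw [hrr]
      · have e3 : i + 1 = i' + 2 :=
          hfinj _ _ (by omega) (by omega) (by omega) (by omega) ha
        have e4 : i + 2 = i' + 1 :=
          hfinj _ _ (by omega) (by omega) (by omega) (by omega) hb
        exact absurd e4 (by omega)
  · -- MapsTo
    intro x hx
    simp only [pathHG, Finset.coe_Icc, Set.mem_Icc] at hx
    obtain ⟨x1, rfl⟩ : ∃ t, x = t + 1 := ⟨x - 1, by omega⟩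
    obtain ⟨i, r, hrd, hx1⟩ := hdec x1
    rw [hx1] at hx
    show f' (x1 + 1) ∈ (↑(H.edges.sup (bigEdge k ℓ)) : Set ℕ)
    rw [hx1, hf'spec i r hrd]
    have him : i ≤ m := hible i r hrd hx.2
    by_cases h5 : r < ℓ
    · rw [if_pos h5]
      rcases Nat.lt_or_ge i m with hlt | hge
      · have hsub := Finset.le_sup (f := bigEdge k ℓ) (fedge' i (by omega))
        exact Finset.mem_coe.2 (hsub (core_mem_bigEdge k ℓ (Or.inl rfl) h5))
      · have hie : i = m := by omega
        have hsub := Finset.le_sup (f := bigEdge k ℓ) (fedge' (m-1) (by omega))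
        refine Finset.mem_coe.2 (hsub (core_mem_bigEdge k ℓ ?_ h5))
        right
        rw [hie]
        congr 1
        omega
    · rw [if_neg h5]
      have him2 : i + 1 ≤ m := hible2 i r (by omega) hrd hx.2
      have hsub := Finset.le_sup (f := bigEdge k ℓ) (fedge' i (by omega))
      refine Finset.mem_coe.2 (hsub ?_)
      rw [bigEdge_pair]
      exact Finset.mem_union_right _
        (Finset.mem_image.2 ⟨r - ℓ, Finset.mem_range.2 (by omega), rfl⟩)
  · -- edges
    intro e he
    rw [hpke] at he
    simp only [Finset.mem_image, Finset.mem_range] at he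
    obtain ⟨i, hi, rfl⟩ := he
    rw [himg i hi]
    show _ ∈ H.edges.image (bigEdge k ℓ)
    exact Finset.mem_image.2 ⟨{f (i+1), f (i+2)}, fedge' i (by omega), rfl⟩
  · -- colors
    intro e he
    rw [hpke] at he
    simp only [Finset.mem_image, Finset.mem_range] at he
    obtain ⟨i, hi, rfl⟩ := he
    rw [himg i hi]
    exact fcol' i (by omega)

end Stmt3Aux

/-- For `1 ≤ ℓ ≤ k/2` and `n ≡ ℓ (mod k−ℓ)`,
`R̂(P^(k)_{n,ℓ}) ≤ R̂(P_n)`, where `P_n = P^(2)_{n,1}` is the graph path on `n` vertices. -/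
theorem stmt3 (k ℓ n : ℕ) (h1 : 1 ≤ ℓ) (h2 : 2 * ℓ ≤ k)
    (hmod : n % (k - ℓ) = ℓ % (k - ℓ)) :
    UniformHypergraph.sizeRamsey (pathHG k ℓ n) ≤ UniformHypergraph.sizeRamsey (pathHG 2 1 n) := by
  by_cases hkn : n < k
  · -- the ℓ-path has no edges, so the trivial edgeless host works
    have hedg : (pathHG k ℓ n).edges = ∅ := by
      show Finset.image _ (Finset.range ((n-ℓ)/(k-ℓ))) = ∅
      have hz : (n-ℓ)/(k-ℓ) = 0 := Nat.div_eq_of_lt (by omega)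
      rw [hz]
      simp
    have h0 : (0:ℕ) ∈ {m | ∃ H : UniformHypergraph k, H.Arrows (pathHG k ℓ n) ∧ H.edges.card = m} := by
      refine ⟨⟨Finset.Icc 1 n, ∅, by simp, by simp⟩, ?_, rfl⟩
      intro χ
      refine ⟨id, true, ⟨Set.injOn_id _, fun x hx => hx, ?_⟩, ?_⟩ <;>
        · intro e he
          rw [hedg] at he
          exact absurd he (Finset.notMem_empty e)
    exact le_trans (Nat.sInf_le h0) (Nat.zero_le _)
  · push_neg at hkn
    have hS2 : Set.Nonempty
        {m | ∃ H : UniformHypergraph 2, H.Arrows (pathHG 2 1 n) ∧ H.edges.card = m} :=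
      ⟨_, UniformHypergraph.completeHG 2 (2*n), Stmt3Aux.complete_arrows n, rfl⟩
    obtain ⟨H, hH, hc⟩ := Nat.sInf_mem hS2
    refine Nat.sInf_le ⟨Stmt3Aux.bigHG k ℓ h2 H,
      Stmt3Aux.big_arrows k ℓ n h1 h2 hkn hmod H hH, ?_⟩
    rw [UniformHypergraph.sizeRamsey, ← hc]
    show (H.edges.image (Stmt3Aux.bigEdge k ℓ)).card = H.edges.card
    apply Finset.card_image_of_injOn
    intro e he e' he' heq
    obtain ⟨x, y, hxy, rfl⟩ := Finset.card_eq_two.1 (H.card_eq e he)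
    obtain ⟨x', y', hxy', rfl⟩ := Finset.card_eq_two.1 (H.card_eq e' he')
    exact Stmt3Aux.bigEdge_inj_pairs k ℓ h1 hxy hxy' heq
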